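/- For every positive integer x, the factorial satisfies √(2π)·x^(x+1/2)·e^(−x)·e^(1/(12x+1)) < x! < √(2π)·x^(x+1/2)·e^(−x)·e^(1/(12x)). -/

import Mathlib

open Real

open Filter Topology


lemma logA {t : ℝ} (h0 : 0 < t) (h1 : t < 1) :
    2*t + 2*t^3/3 < Real.log ((1+t)/(1-t)) := by
  have key : StrictMonoOn (fun s : ℝ => Real.log (1+s) - Real.log (1-s) - 2*s - 2*s^3/3)
      (Set.Icc 0 t) := by
    apply strictMonoOn_of_deriv_pos (convex_Icc 0 t)
    · apply ContinuousOn.sub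
      apply ContinuousOn.sub
      apply ContinuousOn.sub
      · exact (Real.continuousOn_log.comp (by fun_prop)
          (fun s hs => by simp only [Set.mem_Icc] at hs; intro h; simp at h; nlinarith [hs.1]))
      · exact (Real.continuousOn_log.comp (by fun_prop)
          (fun s hs => by simp only [Set.mem_Icc] at hs; intro h; simp at h; nlinarith [hs.2]))
      · fun_prop
      · fun_prop
    · intro s hs
      rw [interior_Icc] at hs
      obtain ⟨hs0, hst⟩ := hs
      have hs1 : s < 1 := lt_of_lt_of_le hst h1.le
      have h1p : (0:ℝ) < 1 + s := by linarith
      have h1m : (0:ℝ) < 1 - s := by linarith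
      have hd : HasDerivAt (fun s : ℝ => Real.log (1+s) - Real.log (1-s) - 2*s - 2*s^3/3)
          (1/(1+s) - (-1)/(1-s) - 2 - 2*(3*s^2)/3) s := by
        have d1 : HasDerivAt (fun s : ℝ => Real.log (1+s)) (1/(1+s)) s := by
          have := (Real.hasDerivAt_log h1p.ne').comp s ((hasDerivAt_id s).const_add 1)
          simpa [one_div, Function.comp_def] using this
        have d2 : HasDerivAt (fun s : ℝ => Real.log (1-s)) ((-1)/(1-s)) s := by
          have := (Real.hasDerivAt_log h1m.ne').comp s ((hasDerivAt_id s).const_sub 1)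
          simpa [div_eq_mul_inv, Function.comp_def] using this
        exact (((d1.sub d2).sub ((hasDerivAt_id s).const_mul 2)).sub
          (((hasDerivAt_pow 3 s).const_mul 2).div_const 3)).congr_deriv (by ring)
      rw [hd.deriv]
      have heq : 1/(1+s) - (-1)/(1-s) - 2 - 2*(3*s^2)/3 = 2*s^4/((1+s)*(1-s)) := by
        field_simp; ring
      rw [heq]; positivity
  have h1m : (0:ℝ) < 1 - t := by linarith
  have h1p : (0:ℝ) < 1 + t := by linarith
  have := key (Set.left_mem_Icc.2 h0.le) (Set.right_mem_Icc.2 h0.le) h0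
  simp only [Real.log_one, add_zero, sub_zero, mul_zero] at this
  rw [Real.log_div h1p.ne' h1m.ne']
  norm_num at this
  linarith

lemma logB {t : ℝ} (h0 : 0 < t) (h1 : t < 1) :
    Real.log ((1+t)/(1-t)) < 2*t + 2*t^3/(3*(1-t^2)) := by
  have key : StrictMonoOn (fun s : ℝ => 2*s + 2*s^3/(3*(1-s^2)) - (Real.log (1+s) - Real.log (1-s)))
      (Set.Icc 0 t) := by
    apply strictMonoOn_of_deriv_pos (convex_Icc 0 t)
    · apply ContinuousOn.sub
      · apply ContinuousOn.add (by fun_prop)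
        apply ContinuousOn.div (by fun_prop) (by fun_prop)
        intro s hs
        simp only [Set.mem_Icc] at hs
        have : s < 1 := lt_of_le_of_lt hs.2 h1
        nlinarith [hs.1]
      · apply ContinuousOn.sub
        · exact (Real.continuousOn_log.comp (by fun_prop)
            (fun s hs => by simp only [Set.mem_Icc] at hs; intro h; simp at h; nlinarith [hs.1]))
        · apply Real.continuousOn_log.comp (f := fun s : ℝ => 1 - s) (by fun_prop)
          intro s hs
          simp only [Set.mem_Icc] at hs
          intro h
          simp at h
          have : s < 1 := lt_of_le_of_lt hs.2 h1
          nlinarith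
    · intro s hs
      rw [interior_Icc] at hs
      obtain ⟨hs0, hst⟩ := hs
      have hs1 : s < 1 := lt_of_lt_of_le hst h1.le
      have h1p : (0:ℝ) < 1 + s := by linarith
      have h1m : (0:ℝ) < 1 - s := by linarith
      have hden : (0:ℝ) < 3*(1-s^2) := by nlinarith
      have hd : HasDerivAt (fun s : ℝ => 2*s + 2*s^3/(3*(1-s^2)) - (Real.log (1+s) - Real.log (1-s)))
          (2 + ((2*(3*s^2))*(3*(1-s^2)) - (2*s^3)*(3*(-(2*s))))/(3*(1-s^2))^2
            - (1/(1+s) - (-1)/(1-s))) s := by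
        have d1 : HasDerivAt (fun s : ℝ => Real.log (1+s)) (1/(1+s)) s := by
          have := (Real.hasDerivAt_log h1p.ne').comp s ((hasDerivAt_id s).const_add 1)
          simpa [one_div, Function.comp_def] using this
        have d2 : HasDerivAt (fun s : ℝ => Real.log (1-s)) ((-1)/(1-s)) s := by
          have := (Real.hasDerivAt_log h1m.ne').comp s ((hasDerivAt_id s).const_sub 1)
          simpa [div_eq_mul_inv, Function.comp_def] using this
        have dnum : HasDerivAt (fun s : ℝ => 2*s^3) (2*(3*s^2)) s :=
          (hasDerivAt_pow 3 s).const_mul 2 |>.congr_deriv (by ring)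
        have dden : HasDerivAt (fun s : ℝ => 3*(1-s^2)) (3*(-(2*s))) s := by
          have : HasDerivAt (fun s : ℝ => 1 - s^2) (-(2*s)) s := by
            have := ((hasDerivAt_pow 2 s).const_sub 1)
            simpa using this.congr_deriv (by push_cast; ring)
          exact this.const_mul 3
        exact ((((hasDerivAt_id s).const_mul 2).add (dnum.div dden hden.ne')).sub
          (d1.sub d2)).congr_deriv (by ring)
      rw [hd.deriv]
      have heq : 2 + ((2*(3*s^2))*(3*(1-s^2)) - (2*s^3)*(3*(-(2*s))))/(3*(1-s^2))^2
            - (1/(1+s) - (-1)/(1-s)) = (4/3)*s^4/(1-s^2)^2 := by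
        have h2 : (1:ℝ) - s^2 ≠ 0 := by nlinarith
        field_simp
        ring
      rw [heq]
      have h2 : (0:ℝ) < 1 - s^2 := by nlinarith
      positivity
  have h1m : (0:ℝ) < 1 - t := by linarith
  have h1p : (0:ℝ) < 1 + t := by linarith
  have := key (Set.left_mem_Icc.2 h0.le) (Set.right_mem_Icc.2 h0.le) h0
  simp only [Real.log_one] at this
  rw [Real.log_div h1p.ne' h1m.ne']
  norm_num at this
  linarith

noncomputable def dS (n : ℕ) : ℝ :=
  Real.log (Nat.factorial n) - ((n : ℝ) + 1/2) * Real.log n + n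

lemma dS_step (n : ℕ) (hn : 1 ≤ n) :
    dS n - dS (n+1) = ((n : ℝ) + 1/2) * Real.log ((1 + 1/(2*(n:ℝ)+1))/(1 - 1/(2*(n:ℝ)+1))) - 1 := by
  have hn0 : (0:ℝ) < n := by exact_mod_cast hn
  have h2n : (0:ℝ) < 2*(n:ℝ)+1 := by linarith
  have hfrac : (1 + 1/(2*(n:ℝ)+1))/(1 - 1/(2*(n:ℝ)+1)) = ((n:ℝ)+1)/n := by
    rw [div_eq_div_iff]
    · field_simp; ring
    · have : 1 - 1/(2*(n:ℝ)+1) = (2*n)/(2*n+1) := by field_simp; ring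
      rw [this]; positivity
    · positivity
  rw [hfrac]
  have hfact : Real.log (Nat.factorial (n+1)) = Real.log (n+1) + Real.log (Nat.factorial n) := by
    rw [Nat.factorial_succ]
    push_cast
    rw [Real.log_mul (by positivity) (by positivity)]
  have hlogdiv : Real.log (((n:ℝ)+1)/n) = Real.log ((n:ℝ)+1) - Real.log n :=
    Real.log_div (by positivity) hn0.ne'
  simp only [dS, hfact]
  push_cast
  rw [hlogdiv]
  ring

lemma dS_step_bounds (n : ℕ) (hn : 1 ≤ n) :
    1/(12*(n:ℝ)+1) - 1/(12*((n:ℝ)+1)+1) < dS n - dS (n+1) ∧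
    dS n - dS (n+1) < 1/(12*(n:ℝ)) - 1/(12*((n:ℝ)+1)) := by
  have hn0 : (1:ℝ) ≤ n := by exact_mod_cast hn
  set N : ℝ := (n : ℝ)
  have h2n : (0:ℝ) < 2*N+1 := by linarith
  set t : ℝ := 1/(2*N+1) with ht
  have ht0 : 0 < t := by positivity
  have ht1 : t < 1 := by rw [ht, div_lt_one h2n]; linarith
  have hA := logA ht0 ht1
  have hB := logB ht0 ht1
  rw [dS_step n hn]
  have hcoef : (0:ℝ) < N + 1/2 := by linarith
  constructor
  · have hlb : (N + 1/2) * (2*t + 2*t^3/3) - 1 < (N + 1/2) * Real.log ((1+t)/(1-t)) - 1 := by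
      have := mul_lt_mul_of_pos_left hA hcoef
      linarith
    refine lt_trans ?_ hlb
    have hexp : (N + 1/2) * (2*t + 2*t^3/3) - 1 = t^2/3 := by
      rw [ht]; field_simp; ring
    rw [hexp, ht]
    have h12 : (0:ℝ) < 12*N+1 := by linarith
    have h13 : (0:ℝ) < 12*(N+1)+1 := by linarith
    rw [div_pow, one_pow, div_div, div_sub_div _ _ h12.ne' h13.ne',
      div_lt_div_iff₀ (by positivity) (by positivity)]
    nlinarith [hn0]
  · have hub : (N + 1/2) * Real.log ((1+t)/(1-t)) - 1 < (N + 1/2) * (2*t + 2*t^3/(3*(1-t^2))) - 1 := by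
      have := mul_lt_mul_of_pos_left hB hcoef
      linarith
    refine lt_of_lt_of_le hub ?_
    have hexp : (N + 1/2) * (2*t + 2*t^3/(3*(1-t^2))) - 1 = 1/(12*N) - 1/(12*(N+1)) := by
      have ht2 : (1:ℝ) - t^2 = (4*N^2+4*N)/(2*N+1)^2 := by
        rw [ht]; field_simp; ring
      rw [ht, ht2]
      have hN : (0:ℝ) < N := by linarith
      field_simp
      ring
    rw [hexp]

lemma tendsto_dS : Tendsto dS atTop (𝓝 (Real.log (Real.sqrt (2*π)))) := by
  have hπ : (0:ℝ) < π := Real.pi_pos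
  have h1 : Tendsto (fun n => Real.log (Stirling.stirlingSeq n)) atTop
      (𝓝 (Real.log (Real.sqrt π))) :=
    ((Real.continuousAt_log (by positivity)).tendsto).comp Stirling.tendsto_stirlingSeq_sqrt_pi
  have h2 := h1.add_const (Real.log 2 / 2)
  have hval : Real.log (Real.sqrt π) + Real.log 2 / 2 = Real.log (Real.sqrt (2*π)) := by
    rw [Real.log_sqrt hπ.le, Real.log_sqrt (by positivity), Real.log_mul (by norm_num) hπ.ne']
    ring
  rw [hval] at h2
  refine h2.congr' ?_
  filter_upwards [eventually_ge_atTop 1] with n hn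
  have hn0 : (0:ℝ) < n := by exact_mod_cast hn
  have hfac : (0:ℝ) < (Nat.factorial n : ℝ) := by exact_mod_cast n.factorial_pos
  have hsq : (0:ℝ) < Real.sqrt (2*n) := Real.sqrt_pos.2 (by positivity)
  have hne : (0:ℝ) < ((n:ℝ) / Real.exp 1) ^ n := by positivity
  rw [Stirling.stirlingSeq, Real.log_div hfac.ne' (by positivity),
    Real.log_mul hsq.ne' hne.ne', Real.log_pow, Real.log_sqrt (by positivity),
    Real.log_mul (by norm_num) hn0.ne', Real.log_div hn0.ne' (Real.exp_pos 1).ne',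
    Real.log_exp]
  simp only [dS]
  push_cast
  ring

lemma dS_lt (x : ℕ) (hx : 1 ≤ x) :
    Real.log (Real.sqrt (2*π)) + 1/(12*(x:ℝ)+1) < dS x ∧
    dS x < Real.log (Real.sqrt (2*π)) + 1/(12*(x:ℝ)) := by
  set L := Real.log (Real.sqrt (2*π))
  -- the two auxiliary sequences
  set u : ℕ → ℝ := fun n => dS n - 1/(12*(n:ℝ)) with hu
  set v : ℕ → ℝ := fun n => dS n - 1/(12*(n:ℝ)+1) with hv
  have h12 : Tendsto (fun n : ℕ => 12*(n:ℝ)) atTop atTop :=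
    Tendsto.const_mul_atTop (by norm_num) tendsto_natCast_atTop_atTop
  have hz1 : Tendsto (fun n : ℕ => 1/(12*(n:ℝ))) atTop (𝓝 0) := by
    have := tendsto_inv_atTop_zero.comp h12
    simpa only [Function.comp_def, ← one_div] using this
  have hz2 : Tendsto (fun n : ℕ => 1/(12*(n:ℝ)+1)) atTop (𝓝 0) := by
    have := tendsto_inv_atTop_zero.comp (tendsto_atTop_add_const_right _ 1 h12)
    simpa only [Function.comp_def, ← one_div] using this
  have hul : Tendsto u atTop (𝓝 L) := by
    have := tendsto_dS.sub hz1
    rw [sub_zero] at this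
    exact this
  have hvl : Tendsto v atTop (𝓝 L) := by
    have := tendsto_dS.sub hz2
    rw [sub_zero] at this
    exact this
  have hustep : ∀ n, 1 ≤ n → u n < u (n+1) := by
    intro n hn
    have := (dS_step_bounds n hn).2
    simp only [hu]
    push_cast
    linarith
  have hvstep : ∀ n, 1 ≤ n → v (n+1) < v n := by
    intro n hn
    have := (dS_step_bounds n hn).1
    simp only [hv]
    push_cast
    linarith
  have humono : ∀ m, x + 1 ≤ m → u (x+1) ≤ u m := by
    intro m hm
    induction m, hm using Nat.le_induction with
    | base => exact le_refl _
    | succ m hm ih => exact ih.trans (hustep m (by omega)).le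
  have hvmono : ∀ m, x + 1 ≤ m → v m ≤ v (x+1) := by
    intro m hm
    induction m, hm using Nat.le_induction with
    | base => exact le_refl _
    | succ m hm ih => exact (hvstep m (by omega)).le.trans ih
  have huL : u (x+1) ≤ L := ge_of_tendsto hul (eventually_atTop.2 ⟨x+1, humono⟩)
  have hvL : L ≤ v (x+1) := le_of_tendsto hvl (eventually_atTop.2 ⟨x+1, hvmono⟩)
  have h1 : u x < L := lt_of_lt_of_le (hustep x hx) huL
  have h2 : L < v x := lt_of_le_of_lt hvL (hvstep x hx)
  constructor
  · simp only [hv] at h2; linarith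
  · simp only [hu] at h1; linarith

theorem stirling_two_sided (x : ℕ) (hx : 0 < x) :
    Real.sqrt (2 * π) * (x : ℝ) ^ ((x : ℝ) + 1/2) * Real.exp (-(x : ℝ)) *
      Real.exp (1 / (12 * (x : ℝ) + 1)) < (Nat.factorial x : ℝ) ∧
    (Nat.factorial x : ℝ) <
      Real.sqrt (2 * π) * (x : ℝ) ^ ((x : ℝ) + 1/2) * Real.exp (-(x : ℝ)) *
        Real.exp (1 / (12 * (x : ℝ))) := by
  have hπ := Real.pi_pos
  have hX : (0:ℝ) < x := by exact_mod_cast hx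
  have hfac : (0:ℝ) < (Nat.factorial x : ℝ) := by exact_mod_cast x.factorial_pos
  have hsq : (0:ℝ) < Real.sqrt (2*π) := Real.sqrt_pos.2 (by positivity)
  have hS : Real.sqrt (2*π) = Real.exp (Real.log (Real.sqrt (2*π))) := (Real.exp_log hsq).symm
  have hP : (x:ℝ) ^ ((x:ℝ) + 1/2) = Real.exp (Real.log x * ((x:ℝ) + 1/2)) :=
    Real.rpow_def_of_pos hX _
  have hF : (Nat.factorial x : ℝ) = Real.exp (Real.log (Nat.factorial x)) :=
    (Real.exp_log hfac).symm
  obtain ⟨h1, h2⟩ := dS_lt x hx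
  constructor
  · rw [hS, hP, hF, ← Real.exp_add, ← Real.exp_add, ← Real.exp_add]
    apply Real.exp_lt_exp.2
    simp only [dS] at h1
    linarith
  · rw [hS, hP, hF, ← Real.exp_add, ← Real.exp_add, ← Real.exp_add]
    apply Real.exp_lt_exp.2
    simp only [dS] at h2
    linarith
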